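/- Let $1<p<\infty$, $n\in\mathbb{N}$, and let $\mathcal{Z}_{2n+1}=(z_k)_{k=0}^{2n}$ with $0\le z_0<z_1<\dots<z_{2n}<1$ be interpolation nodes such that the Marcinkiewicz--Zygmund inequalities $C_2\|T\|_{\ell_p(\mathcal{Z}_{2n+1})}\le\|T\|_p\le C_1\|T\|_{\ell_p(\mathcal{Z}_{2n+1})}$ hold for all $T\in\mathcal{T}_n$, with positive constants $C_1,C_2$. Let $L_n^{\mathcal{Z}}(f)$ be the unique trigonometric polynomial in $\mathcal{T}_n$ with $L_n^{\mathcal{Z}}(f)(z_k)=f(z_k)$ for $k=0,\dots,2n$. Then for every bounded measurable 1-periodic function $f$: $\|f-L_n^{\mathcal{Z}}(f)\|_p\le(1+C_1C_2^{-1})\,\widetilde{E}_n(f)_p$. -/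

import Mathlib

open MeasureTheory Filter Finset

noncomputable def LpNorm (p : ℝ) (f : ℝ → ℝ) : ℝ :=
  (∫ x in (0:ℝ)..1, |f x| ^ p) ^ (1 / p)

def MemLpT (p : ℝ) (f : ℝ → ℝ) : Prop :=
  Function.Periodic f 1 ∧ Measurable f ∧
    IntervalIntegrable (fun x => |f x| ^ p) MeasureTheory.volume 0 1

noncomputable def Delta (r : ℕ) (h : ℝ) (f : ℝ → ℝ) (x : ℝ) : ℝ :=
  ∑ ν ∈ Finset.range (r + 1), ((-1 : ℝ) ^ ν * (r.choose ν : ℝ)) * f (x + ((r : ℝ) - (ν : ℝ)) * h)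

noncomputable def omegaMod (r : ℕ) (p : ℝ) (f : ℝ → ℝ) (δ : ℝ) : ℝ :=
  sSup {y | ∃ h : ℝ, 0 < h ∧ h < δ ∧ y = LpNorm p (Delta r h f)}

noncomputable def steklov (r : ℕ) (δ : ℝ) (f : ℝ → ℝ) (x : ℝ) : ℝ :=
  (-1 : ℝ) ^ (r + 1) * (((2 * r).choose r : ℝ))⁻¹ * (2 / δ) *
    ∫ t in (-(δ / 2))..(δ / 2),
      ∑ ν ∈ Finset.range r,
        (-1 : ℝ) ^ ν * (((2 * r).choose ν : ℝ)) * f (x + (((r : ℝ) - (ν : ℝ)) / (r : ℝ)) * t)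

noncomputable def ellp (p : ℝ) (n : ℕ) (x : ℕ → ℝ) (f : ℝ → ℝ) : ℝ :=
  ((1 / (n : ℝ)) * ∑ k ∈ Finset.range n, |f (x k)| ^ p) ^ (1 / p)

def SobolevW (s : ℕ) (g : ℝ → ℝ) : Prop :=
  Function.Periodic g 1 ∧ ContDiff ℝ (s : ℕ∞) g

noncomputable def localMod (r : ℕ) (f : ℝ → ℝ) (x δ : ℝ) : ℝ :=
  sSup {y | ∃ t h : ℝ, t ∈ Set.Icc (x - r * δ / 2) (x + r * δ / 2) ∧
    (t + r * h) ∈ Set.Icc (x - r * δ / 2) (x + r * δ / 2) ∧ y = |Delta r h f t|}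

noncomputable def tauMod (r : ℕ) (p : ℝ) (f : ℝ → ℝ) (δ : ℝ) : ℝ :=
  (∫ x in (0:ℝ)..1, localMod r f x δ ^ p) ^ (1 / p)

def IsTrigPoly (n : ℕ) (T : ℝ → ℝ) : Prop :=
  ∃ c : ℤ → ℂ, ∀ x : ℝ, (T x : ℂ) =
    ∑ ℓ ∈ Finset.Icc (-(n : ℤ)) (n : ℤ),
      c ℓ * Complex.exp (2 * Real.pi * Complex.I * (ℓ : ℂ) * (x : ℂ))

noncomputable def tildeE (n : ℕ) (p : ℝ) (f : ℝ → ℝ) : ℝ :=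
  sInf {y | ∃ Q q : ℝ → ℝ, IsTrigPoly n Q ∧ IsTrigPoly n q ∧
    (∀ x, q x ≤ f x ∧ f x ≤ Q x) ∧ y = LpNorm p (fun x => Q x - q x)}

noncomputable def dirichlet (n : ℕ) (x : ℝ) : ℝ :=
  ∑ ℓ ∈ Finset.Icc (-(n : ℤ)) (n : ℤ), Real.cos (2 * Real.pi * (ℓ : ℝ) * x)

noncomputable def lagrange (n : ℕ) (f : ℝ → ℝ) (x : ℝ) : ℝ :=
  (1 / (2 * (n : ℝ) + 1)) * ∑ k ∈ Finset.range (2 * n + 1),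
    f ((k : ℝ) / (2 * (n : ℝ) + 1)) * dirichlet n (x - (k : ℝ) / (2 * (n : ℝ) + 1))

def NodesOK (γ : ℝ) (X : ℕ → ℕ → ℝ) : Prop :=
  ∀ n : ℕ, 1 ≤ n →
    (0 ≤ X n 0) ∧ (∀ k, k + 1 < n → X n k < X n (k + 1)) ∧ (X n (n - 1) < 1) ∧
    (∀ k, k + 1 < n → γ / (n : ℝ) ≤ X n (k + 1) - X n k) ∧
    (γ / (n : ℝ) ≤ 1 + X n 0 - X n (n - 1))

def NodesOrd (X : ℕ → ℕ → ℝ) : Prop :=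
  ∀ n : ℕ, 1 ≤ n →
    (0 ≤ X n 0) ∧ (∀ k, k + 1 < n → X n k < X n (k + 1)) ∧ (X n (n - 1) < 1)

def SamplingForm (p : ℝ) (X : ℕ → ℕ → ℝ) (φ : ℕ → ℕ → ℝ → ℝ)
    (G : ℕ → (ℝ → ℝ) → ℝ → ℝ) : Prop :=
  (∀ n k, MemLpT p (φ n k)) ∧
  ∀ (n : ℕ) (f : ℝ → ℝ) (x : ℝ), G n f x = ∑ k ∈ Finset.range n, f (X n k) * φ n k x

def CondC1 (p K1 : ℝ) (X : ℕ → ℕ → ℝ) (G : ℕ → (ℝ → ℝ) → ℝ → ℝ) : Prop :=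
  ∀ f : ℝ → ℝ, MemLpT p f → ∀ n : ℕ, 1 ≤ n → LpNorm p (G n f) ≤ K1 * ellp p n (X n) f

def CondC1' (p K2 : ℝ) (X : ℕ → ℕ → ℝ) (G : ℕ → (ℝ → ℝ) → ℝ → ℝ) : Prop :=
  ∀ f : ℝ → ℝ, MemLpT p f → ∀ n : ℕ, 1 ≤ n → K2 * ellp p n (X n) f ≤ LpNorm p (G n f)

def CondC2' (p K3 : ℝ) (s : ℕ) (G : ℕ → (ℝ → ℝ) → ℝ → ℝ) : Prop :=
  ∀ g : ℝ → ℝ, SobolevW s g → ∀ n : ℕ, 1 ≤ n →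
    LpNorm p (fun x => g x - G n g x) ≤ K3 / (n : ℝ) ^ s * LpNorm p (iteratedDeriv s g)

def CondC3 (p K5 : ℝ) (s : ℕ) (G : ℕ → (ℝ → ℝ) → ℝ → ℝ) : Prop :=
  ∀ f : ℝ → ℝ, MemLpT p f → ∀ n : ℕ, 1 ≤ n →
    SobolevW s (G n f) ∧
    (1 / (n : ℝ) ^ s) * LpNorm p (iteratedDeriv s (G n f)) ≤
      K5 * omegaMod s p (G n f) (1 / (n : ℝ))

noncomputable def Gprev (G : ℕ → (ℝ → ℝ) → ℝ → ℝ) (f : ℝ → ℝ) (ν : ℕ) : ℝ → ℝ :=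
  if ν = 0 then fun _ => 0 else G (2 ^ (ν - 1)) f

def CondC4 (p K4 : ℝ) (s : ℕ) (G : ℕ → (ℝ → ℝ) → ℝ → ℝ) (f : ℝ → ℝ) : Prop :=
  ∀ ν : ℕ,
    SobolevW s (fun x => G (2 ^ ν) f x - Gprev G f ν x) ∧
    LpNorm p (iteratedDeriv s (fun x => G (2 ^ ν) f x - Gprev G f ν x)) ≤
      K4 * 2 ^ (s * ν) * LpNorm p (fun x => G (2 ^ ν) f x - Gprev G f ν x)

noncomputable def Kfun (s : ℕ) (p : ℝ) (n : ℕ) (x : ℕ → ℝ) (f : ℝ → ℝ) : ℝ :=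
  sInf {y | ∃ g : ℝ → ℝ, SobolevW s g ∧
    y = ellp p n x (fun t => f t - g t) + LpNorm p (fun t => f t - g t) +
        (1 / (n : ℝ) ^ s) * LpNorm p (iteratedDeriv s g)}

local notation "μ01" => MeasureTheory.volume.restrict (Set.Ioc (0:ℝ) 1)

instance : IsFiniteMeasure (MeasureTheory.volume.restrict (Set.Ioc (0:ℝ) 1)) :=
  ⟨by simp⟩

lemma lp_eq {p : ℝ} (hp : 0 < p) (g : ℝ → ℝ) (hg : Measurable g) :
    LpNorm p g = (eLpNorm g (ENNReal.ofReal p) μ01).toReal := by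
  have hp0 : ENNReal.ofReal p ≠ 0 := by simp [ENNReal.ofReal_eq_zero, not_le, hp]
  have htr : (ENNReal.ofReal p).toReal = p := ENNReal.toReal_ofReal hp.le
  rw [eLpNorm_eq_lintegral_rpow_enorm_toReal hp0 ENNReal.ofReal_ne_top, htr]
  rw [LpNorm, intervalIntegral.integral_of_le zero_le_one]
  rw [integral_eq_lintegral_of_nonneg_ae (Filter.Eventually.of_forall fun x => by positivity)
    ((hg.abs.pow_const p).aestronglyMeasurable)]
  rw [← ENNReal.toReal_rpow]
  congr 2
  refine lintegral_congr fun x => ?_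
  rw [← ENNReal.ofReal_rpow_of_nonneg (abs_nonneg _) hp.le]
  congr 1
  simp [← Real.norm_eq_abs, ofReal_norm_eq_enorm]

lemma memLp_of_bdd {p : ℝ} (g : ℝ → ℝ) (hg : Measurable g) (C : ℝ)
    (hC : ∀ x ∈ Set.Ioc (0:ℝ) 1, |g x| ≤ C) :
    MemLp g (ENNReal.ofReal p) μ01 := by
  refine MemLp.of_bound hg.aestronglyMeasurable C ?_
  filter_upwards [ae_restrict_mem measurableSet_Ioc] with x hx
  simpa [Real.norm_eq_abs] using hC x hx

lemma cont_bdd (g : ℝ → ℝ) (hg : Continuous g) :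
    ∃ C : ℝ, ∀ x ∈ Set.Ioc (0:ℝ) 1, |g x| ≤ C := by
  obtain ⟨C, hC⟩ := (isCompact_Icc (a := (0:ℝ)) (b := 1)).exists_bound_of_continuousOn
    hg.continuousOn
  exact ⟨C, fun x hx => by simpa [Real.norm_eq_abs] using hC x (Set.Ioc_subset_Icc_self hx)⟩

lemma memLp_of_cont {p : ℝ} (g : ℝ → ℝ) (hg : Continuous g) :
    MemLp g (ENNReal.ofReal p) μ01 := by
  obtain ⟨C, hC⟩ := cont_bdd g hg
  exact memLp_of_bdd g hg.measurable C hC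

lemma lp_triangle {p : ℝ} (hp : 1 ≤ p) (g h : ℝ → ℝ) (hgm : Measurable g)
    (hhm : Measurable h) (hg : MemLp g (ENNReal.ofReal p) μ01)
    (hh : MemLp h (ENNReal.ofReal p) μ01) :
    LpNorm p (fun x => g x + h x) ≤ LpNorm p g + LpNorm p h := by
  have hp0 : (0:ℝ) < p := lt_of_lt_of_le one_pos hp
  rw [lp_eq hp0 (fun x => g x + h x) (hgm.add hhm), lp_eq hp0 _ hgm, lp_eq hp0 _ hhm]
  rw [← ENNReal.toReal_add hg.eLpNorm_ne_top hh.eLpNorm_ne_top]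
  refine ENNReal.toReal_mono (by simp [hg.eLpNorm_ne_top, hh.eLpNorm_ne_top]) ?_
  exact eLpNorm_add_le hg.aestronglyMeasurable hh.aestronglyMeasurable
    (ENNReal.one_le_ofReal.mpr hp)

lemma lp_mono {p : ℝ} (hp : 0 < p) (g h : ℝ → ℝ) (hgm : Measurable g)
    (hhm : Measurable h) (hle : ∀ x, |g x| ≤ |h x|)
    (hh : MemLp h (ENNReal.ofReal p) μ01) :
    LpNorm p g ≤ LpNorm p h := by
  rw [lp_eq hp _ hgm, lp_eq hp _ hhm]
  refine ENNReal.toReal_mono hh.eLpNorm_ne_top ?_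
  exact eLpNorm_mono fun x => by simpa [Real.norm_eq_abs] using hle x

lemma trig_cont {n : ℕ} {T : ℝ → ℝ} (hT : IsTrigPoly n T) : Continuous T := by
  obtain ⟨c, hc⟩ := hT
  have hTeq : T = fun x : ℝ => (∑ ℓ ∈ Finset.Icc (-(n : ℤ)) (n : ℤ),
      c ℓ * Complex.exp (2 * Real.pi * Complex.I * (ℓ : ℂ) * (x : ℂ))).re := by
    funext x
    rw [← hc x]; simp
  rw [hTeq]
  refine Complex.continuous_re.comp ?_
  refine continuous_finset_sum _ fun ℓ _ => continuous_const.mul ?_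
  exact Complex.continuous_exp.comp (continuous_const.mul Complex.continuous_ofReal)

lemma trig_sub {n : ℕ} {T S : ℝ → ℝ} (hT : IsTrigPoly n T) (hS : IsTrigPoly n S) :
    IsTrigPoly n (fun x => T x - S x) := by
  obtain ⟨c, hc⟩ := hT
  obtain ⟨d, hd⟩ := hS
  refine ⟨fun ℓ => c ℓ - d ℓ, fun x => ?_⟩
  push_cast
  rw [hc x, hd x, ← Finset.sum_sub_distrib]
  exact Finset.sum_congr rfl fun ℓ _ => by ring

lemma trig_const (n : ℕ) (M : ℝ) : IsTrigPoly n (fun _ => M) := by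
  refine ⟨fun ℓ => if ℓ = 0 then (M : ℂ) else 0, fun x => ?_⟩
  rw [Finset.sum_eq_single 0]
  · simp
  · intro ℓ _ hℓ; simp [hℓ]
  · intro h; exact absurd (by simp : (0:ℤ) ∈ Finset.Icc (-(n:ℤ)) (n:ℤ)) h

lemma ellp_mono {p : ℝ} (hp : 0 < p) (m : ℕ) (z : ℕ → ℝ) (g h : ℝ → ℝ)
    (hle : ∀ k < m, |g (z k)| ≤ |h (z k)|) :
    ellp p m z g ≤ ellp p m z h := by
  unfold ellp
  refine Real.rpow_le_rpow (by positivity) ?_ (by positivity)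
  refine mul_le_mul_of_nonneg_left ?_ (by positivity)
  refine Finset.sum_le_sum fun k hk => ?_
  exact Real.rpow_le_rpow (abs_nonneg _) (hle k (Finset.mem_range.mp hk)) hp.le

theorem stmt19 (p C1 C2 : ℝ) (hp : 1 < p) (n : ℕ) (hn : 1 ≤ n)
    (z : ℕ → ℝ) (hz0 : 0 ≤ z 0) (hzmono : ∀ k, k + 1 ≤ 2 * n → z k < z (k + 1))
    (hzlast : z (2 * n) < 1) (hC1 : 0 < C1) (hC2 : 0 < C2)
    (hMZ : ∀ T : ℝ → ℝ, IsTrigPoly n T →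
      C2 * ellp p (2 * n + 1) z T ≤ LpNorm p T ∧ LpNorm p T ≤ C1 * ellp p (2 * n + 1) z T) :
    ∀ f L : ℝ → ℝ, Function.Periodic f 1 → Measurable f → (∃ M : ℝ, ∀ x, |f x| ≤ M) →
      IsTrigPoly n L → (∀ k, k ≤ 2 * n → L (z k) = f (z k)) →
      LpNorm p (fun x => f x - L x) ≤ (1 + C1 * C2⁻¹) * tildeE n p f := by
  
  intro f L hper hfm hbdd hL hinterp
  obtain ⟨M, hM⟩ := hbdd
  have hp0 : (0:ℝ) < p := lt_trans one_pos hp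
  have hLc : Continuous L := trig_cont hL
  have hcpos : (0:ℝ) < 1 + C1 * C2⁻¹ := by positivity
  have hM0 : 0 ≤ M := le_trans (abs_nonneg _) (hM 0)
  have hSne : {y | ∃ Q q : ℝ → ℝ, IsTrigPoly n Q ∧ IsTrigPoly n q ∧
      (∀ x, q x ≤ f x ∧ f x ≤ Q x) ∧ y = LpNorm p (fun x => Q x - q x)}.Nonempty := by
    refine ⟨_, fun _ => M, fun _ => -M, trig_const n M, trig_const n (-M),
      fun x => ?_, rfl⟩
    have := abs_le.mp (hM x)
    exact ⟨this.1, this.2⟩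
  have key : ∀ y ∈ {y | ∃ Q q : ℝ → ℝ, IsTrigPoly n Q ∧ IsTrigPoly n q ∧
      (∀ x, q x ≤ f x ∧ f x ≤ Q x) ∧ y = LpNorm p (fun x => Q x - q x)},
      LpNorm p (fun x => f x - L x) ≤ (1 + C1 * C2⁻¹) * y := by
    rintro y ⟨Q, q, hQ, hq, hqf, rfl⟩
    have hQc : Continuous Q := trig_cont hQ
    have hqc : Continuous q := trig_cont hq
    have hQq : IsTrigPoly n (fun x => Q x - q x) := trig_sub hQ hq
    have hqL : IsTrigPoly n (fun x => q x - L x) := trig_sub hq hL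
    have habs : ∀ x, |f x - q x| ≤ |Q x - q x| := fun x => by
      have h1 := (hqf x).1; have h2 := (hqf x).2
      rw [abs_of_nonneg (by linarith), abs_of_nonneg (by linarith)]; linarith
    have memQq := memLp_of_cont (p := p) _ (hQc.sub hqc)
    have memqL := memLp_of_cont (p := p) _ (hqc.sub hLc)
    have memfq : MemLp (fun x => f x - q x) (ENNReal.ofReal p)
        (MeasureTheory.volume.restrict (Set.Ioc (0:ℝ) 1)) := by
      obtain ⟨C, hC⟩ := cont_bdd _ (hQc.sub hqc)
      exact memLp_of_bdd _ (hfm.sub hqc.measurable) C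
        (fun x hx => (habs x).trans (hC x hx))
    have tri : LpNorm p (fun x => f x - L x) ≤
        LpNorm p (fun x => f x - q x) + LpNorm p (fun x => q x - L x) := by
      have heq : (fun x => f x - L x) = fun x => (f x - q x) + (q x - L x) :=
        funext fun x => by ring
      rw [heq]
      exact lp_triangle hp.le _ _ (hfm.sub hqc.measurable)
        (hqc.measurable.sub hLc.measurable) memfq memqL
    have h1 : LpNorm p (fun x => f x - q x) ≤ LpNorm p (fun x => Q x - q x) :=
      lp_mono hp0 _ _ (hfm.sub hqc.measurable) ((hQc.sub hqc).measurable) habs memQq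
    have hMZ1 := hMZ _ hqL
    have hMZ2 := hMZ _ hQq
    have hell : ellp p (2*n+1) z (fun x => q x - L x) ≤
        ellp p (2*n+1) z (fun x => Q x - q x) := by
      refine ellp_mono hp0 _ _ _ _ fun k hk => ?_
      have hk' : k ≤ 2*n := by omega
      rw [hinterp k hk']
      have h1 := (hqf (z k)).1; have h2 := (hqf (z k)).2
      rw [abs_of_nonpos (by linarith), abs_of_nonneg (by linarith)]; linarith
    have hell2 : ellp p (2*n+1) z (fun x => Q x - q x) ≤
        C2⁻¹ * LpNorm p (fun x => Q x - q x) := by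
      have h := mul_le_mul_of_nonneg_left hMZ2.1 (inv_nonneg.mpr hC2.le)
      rwa [← mul_assoc, inv_mul_cancel₀ hC2.ne', one_mul] at h
    have h2 : LpNorm p (fun x => q x - L x) ≤
        C1 * C2⁻¹ * LpNorm p (fun x => Q x - q x) := by
      calc LpNorm p (fun x => q x - L x)
          ≤ C1 * ellp p (2*n+1) z (fun x => q x - L x) := hMZ1.2
        _ ≤ C1 * ellp p (2*n+1) z (fun x => Q x - q x) :=
            mul_le_mul_of_nonneg_left hell hC1.le
        _ ≤ C1 * (C2⁻¹ * LpNorm p (fun x => Q x - q x)) :=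
            mul_le_mul_of_nonneg_left hell2 hC1.le
        _ = C1 * C2⁻¹ * LpNorm p (fun x => Q x - q x) := by ring
    nlinarith [tri, h1, h2]
  unfold tildeE
  have hlow : LpNorm p (fun x => f x - L x) / (1 + C1 * C2⁻¹) ≤
      sInf {y | ∃ Q q : ℝ → ℝ, IsTrigPoly n Q ∧ IsTrigPoly n q ∧
        (∀ x, q x ≤ f x ∧ f x ≤ Q x) ∧ y = LpNorm p (fun x => Q x - q x)} :=
    le_csInf hSne fun y hy => (div_le_iff₀ hcpos).mpr (by rw [mul_comm]; exact key y hy)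
  have := (div_le_iff₀ hcpos).mp hlow
  linarith [this]
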